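/- Fix κ = 0 and any α ∈ (α_lb, α_ub), and let q = q_⋆(α), ψ = ψ_⋆(α). Parametrizing λ = 1 − ι, it holds for all 0 < ι ≤ 0.025 that 𝓗(λ) − 𝓗(1) ≤ 0.81·ι + (ι/2)·log(1/ι). -/

import Mathlib

open MeasureTheory Real Set Filter

noncomputable section

/-- The standard gaussian density `φ(x) = exp(-x²/2)/√(2π)`. -/
def gphi (x : ℝ) : ℝ := Real.exp (-x ^ 2 / 2) / Real.sqrt (2 * Real.pi)

/-- The complementary gaussian distribution function `Φ̄(x) = ∫_x^∞ φ(u) du`. -/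
def Phibar (x : ℝ) : ℝ := ∫ u in Set.Ioi x, gphi u

/-- `𝓔(x) = φ(x) / Φ̄(x)`. -/
def gaussE (x : ℝ) : ℝ := gphi x / Phibar x

/-- `F_q(x) = 𝓔((κ - x)/√(1-q)) / √(1-q)` (with threshold `κ`). -/
def Fq (κ q x : ℝ) : ℝ := gaussE ((κ - x) / Real.sqrt (1 - q)) / Real.sqrt (1 - q)

/-- `P(ψ) = ∫ tanh(√ψ z)² φ(z) dz`. -/
def Pfun (ψ : ℝ) : ℝ := ∫ z : ℝ, Real.tanh (Real.sqrt ψ * z) ^ 2 * gphi z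

/-- `R_κ(q, α) = α ∫ F_q(√q z)² φ(z) dz`. -/
def Rfun (κ q α : ℝ) : ℝ := α * ∫ z : ℝ, Fq κ q (Real.sqrt q * z) ^ 2 * gphi z

/-- `𝒢_κ(α, q, ψ)`. -/
def Gfun (κ α q ψ : ℝ) : ℝ :=
  -(ψ * (1 - q)) / 2 + (∫ z : ℝ, Real.log (2 * Real.cosh (Real.sqrt ψ * z)) * gphi z)
    + α * ∫ z : ℝ, Real.log (Phibar ((κ - Real.sqrt q * z) / Real.sqrt (1 - q))) * gphi z

def alphaLB : ℝ := 0.833078599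
def alphaUB : ℝ := 0.833078600
def qLB : ℝ := 0.56394907949
def qLU : ℝ := 0.56394907950
def qUL : ℝ := 0.56394908029
def qUB : ℝ := 0.56394908030
def psiLB : ℝ := 2.5763513100
def psiLU : ℝ := 2.5763513103
def psiUL : ℝ := 2.5763513221
def psiUB : ℝ := 2.5763513224

/-- `Δ_H(A) = √(A² + m² - (Am)²)` where `m = tanh H`. -/
def DeltaH (H A : ℝ) : ℝ := Real.sqrt (A ^ 2 + Real.tanh H ^ 2 - (A * Real.tanh H) ^ 2)

/-- `B_H(A) = A(1+m)/(Δ_H(A) - m)` where `m = tanh H`. -/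
def BH (H A : ℝ) : ℝ := A * (1 + Real.tanh H) / (DeltaH H A - Real.tanh H)

/-- `S_H(A) = B_H(A)^{-sgn H}`. -/
def SH (H A : ℝ) : ℝ := BH H A ^ (-Real.sign H)

/-- `D_H(A) = (A² - 1)(1 - m²)²/(Δ_H(A) + 1)²` where `m = tanh H`. -/
def DH (H A : ℝ) : ℝ := (A ^ 2 - 1) * (1 - Real.tanh H ^ 2) ^ 2 / (DeltaH H A + 1) ^ 2

/-- The mass function of the measure `P_{H,D}` on `{-1,+1}²` (encoded by `Bool × Bool`,
with `true` for `+1`). -/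
def PHD (H D : ℝ) : Bool × Bool → ℝ := fun p =>
  match p with
  | (true, true) => ((1 + Real.tanh H) ^ 2 + D) / 4
  | (true, false) => (1 - Real.tanh H ^ 2 - D) / 4
  | (false, true) => (1 - Real.tanh H ^ 2 - D) / 4
  | (false, false) => ((1 - Real.tanh H) ^ 2 + D) / 4

/-- `Γ(H, D)`, the Shannon entropy of `P_{H,D}`. -/
def GammaHD (H D : ℝ) : ℝ := ∑ p : Bool × Bool, Real.negMulLog (PHD H D p)

/-- The spin value of a Boolean: `+1` or `-1`. -/
def spin (b : Bool) : ℝ := if b then 1 else -1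

/-- The mass function of the probability measure `Q_{A,B}` on `{-1,+1}²`, with
`a = (log A)/2`, `b = (log B)/2`. -/
def QAB (A B : ℝ) : Bool × Bool → ℝ := fun p =>
  4 * Real.exp (Real.log A / 2 * (spin p.1 * spin p.2 - 1)
      + Real.log B / 2 * (spin p.1 + spin p.2)) / (B + 1 / B + 2 / A)

/-- `ℓ(A) = ∫ (D_{√ψ z}(A)/(1-q)) φ(z) dz`. -/
def ellfun (q ψ A : ℝ) : ℝ := ∫ z : ℝ, DH (Real.sqrt ψ * z) A / (1 - q) * gphi z

/-- `λ_min = -∫ ((1 - |tanh(√ψ z)|)²/(1-q)) φ(z) dz`. -/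
def lamMin (q ψ : ℝ) : ℝ :=
  -∫ z : ℝ, (1 - |Real.tanh (Real.sqrt ψ * z)|) ^ 2 / (1 - q) * gphi z

/-- `A(λ) = ℓ⁻¹(λ)`, the inverse of the bijection `ℓ : (0,∞) → (λ_min, 1)`. -/
def Ainv (q ψ lam : ℝ) : ℝ := Function.invFunOn (ellfun q ψ) (Set.Ioi 0) lam

/-- `𝓗_⋆ = -ψ(1-q) + ∫ log(2 cosh(√ψ z)) φ(z) dz`. -/
def Hstar (q ψ : ℝ) : ℝ :=
  -(ψ * (1 - q)) + ∫ z : ℝ, Real.log (2 * Real.cosh (Real.sqrt ψ * z)) * gphi z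

/-- `𝓗(λ) = -2𝓗_⋆ + ∫ Γ(√ψ z, D_{√ψ z}(A(λ))) φ(z) dz`. -/
def HHfun (q ψ lam : ℝ) : ℝ :=
  -(2 * Hstar q ψ)
    + ∫ z : ℝ, GammaHD (Real.sqrt ψ * z) (DH (Real.sqrt ψ * z) (Ainv q ψ lam)) * gphi z

/-- `ξ_{q,z} = -√q z/√(1-q)` (the threshold `κ = 0` case). -/
def xiqz (q z : ℝ) : ℝ := -(Real.sqrt q * z) / Real.sqrt (1 - q)

/-- `𝓟_⋆ = ψ(1-q)/2 + α ∫ log Φ̄(ξ_{q,z}) φ(z) dz`. -/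
def Pstar (α q ψ : ℝ) : ℝ :=
  ψ * (1 - q) / 2 + α * ∫ z : ℝ, Real.log (Phibar (xiqz q z)) * gphi z

/-- `ℐ_s(λ)`: the double integral
`α ∫∫ log Φ̄((ξ_{q,z} - λν)/√(1-λ²) - 𝓔(ξ_{q,z}) s/(√ψ √(1-q))) φ_{ξ_{q,z}}(ν) dν φ(z) dz`. -/
def Iint (α q ψ lam s : ℝ) : ℝ :=
  α * ∫ z : ℝ,
      (∫ ν in Set.Ici (xiqz q z),
          Real.log (Phibar ((xiqz q z - lam * ν) / Real.sqrt (1 - lam ^ 2)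
            - gaussE (xiqz q z) * s / (Real.sqrt ψ * Real.sqrt (1 - q)))) * gphi ν)
        / Phibar (xiqz q z) * gphi z

/-- `𝓟(λ) = -𝓟_⋆ + ψ(1-q)(1-λ)/(2(1+λ)) + ℐ(λ)` where `ℐ(λ) = ℐ_0(λ)`. -/
def PPfun (α q ψ lam : ℝ) : ℝ :=
  -(Pstar α q ψ) + ψ * (1 - q) * (1 - lam) / (2 * (1 + lam)) + Iint α q ψ lam 0

/-- `𝒮_⋆(λ) = 𝓗(λ) + 𝓟(λ) + inf_s { s²/2 - √ψ √(1-q) s √((1-λ)/(1+λ)) + ℐ_s(λ) - ℐ(λ) }`. -/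
def Sstar (α q ψ lam : ℝ) : ℝ :=
  HHfun q ψ lam + PPfun α q ψ lam +
    ⨅ s : ℝ, (s ^ 2 / 2
      - Real.sqrt ψ * Real.sqrt (1 - q) * s * Real.sqrt ((1 - lam) / (1 + lam))
      + Iint α q ψ lam s - Iint α q ψ lam 0)

section AuxiliaryLemmas

lemma sqrt2pi_pos : 0 < Real.sqrt (2 * Real.pi) := Real.sqrt_pos.mpr (by positivity)

lemma gphi_pos (x : ℝ) : 0 < gphi x := div_pos (Real.exp_pos _) sqrt2pi_pos
lemma gphi_nonneg (x : ℝ) : 0 ≤ gphi x := (gphi_pos x).le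

lemma gphi_def' : gphi = fun x => Real.exp (-(1/2) * x ^ 2) / Real.sqrt (2 * Real.pi) := by
  funext x; rw [gphi]; congr 1; ring

lemma integrable_gphi : Integrable gphi := by
  rw [gphi_def']
  exact (integrable_exp_neg_mul_sq (by norm_num : (0:ℝ) < 1/2)).div_const _

lemma integral_gphi : ∫ x : ℝ, gphi x = 1 := by
  rw [gphi_def']
  rw [MeasureTheory.integral_div, integral_gaussian]
  rw [show Real.pi / (1/2) = 2 * Real.pi by ring]
  exact div_self sqrt2pi_pos.ne'

lemma integrable_id_mul_gphi : Integrable (fun x : ℝ => x * gphi x) := by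
  have h := (integrable_mul_exp_neg_mul_sq (by norm_num : (0:ℝ) < 1/2)).div_const
    (Real.sqrt (2 * Real.pi))
  refine h.congr (Filter.Eventually.of_forall fun x => ?_)
  rw [gphi_def']; simp [mul_div_assoc]

lemma integrable_bdd_mul_gphi {f : ℝ → ℝ} (hf : AEStronglyMeasurable f volume) (C : ℝ)
    (hC : ∀ x, |f x| ≤ C) : Integrable (fun x => f x * gphi x) :=
  integrable_gphi.bdd_mul hf (c := C) (ae_of_all _ fun x => by rw [Real.norm_eq_abs]; exact hC x)

lemma tanh_abs_lt_one (x : ℝ) : |Real.tanh x| < 1 := by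
  rw [Real.tanh_eq_sinh_div_cosh, abs_div, abs_of_pos (Real.cosh_pos x),
    div_lt_one (Real.cosh_pos x)]
  rw [abs_lt]
  constructor
  · have := Real.sinh_lt_cosh (-x)
    simp only [Real.sinh_neg, Real.cosh_neg] at this
    linarith
  · exact Real.sinh_lt_cosh x

lemma tanh_sq_lt_one (x : ℝ) : Real.tanh x ^ 2 < 1 := by
  have h := tanh_abs_lt_one x
  nlinarith [abs_nonneg (Real.tanh x), sq_abs (Real.tanh x)]

lemma continuous_tanh' : Continuous Real.tanh := by
  have : Real.tanh = fun x => Real.sinh x / Real.cosh x :=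
    funext fun x => Real.tanh_eq_sinh_div_cosh x
  rw [this]
  exact Real.continuous_sinh.div Real.continuous_cosh fun x => (Real.cosh_pos x).ne'

lemma hasDerivAt_tanh' (x : ℝ) : HasDerivAt Real.tanh (1 - Real.tanh x ^ 2) x := by
  have h := (Real.hasDerivAt_sinh x).div (Real.hasDerivAt_cosh x) (Real.cosh_pos x).ne'
  have h2 : HasDerivAt Real.tanh
      ((Real.cosh x * Real.cosh x - Real.sinh x * Real.sinh x) / Real.cosh x ^ 2) x :=
    h.congr_of_eventuallyEq (Filter.Eventually.of_forall fun y => Real.tanh_eq_sinh_div_cosh y)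
  convert h2 using 1
  rw [Real.tanh_eq_sinh_div_cosh]
  have hc := (Real.cosh_pos x).ne'
  field_simp

lemma hasDerivAt_gphi (x : ℝ) : HasDerivAt gphi (-(x * gphi x)) x := by
  have h1 : HasDerivAt (fun y : ℝ => -y ^ 2 / 2) (-x) x := by
    have h := ((hasDerivAt_pow 2 x).neg).div_const 2
    exact h.congr_deriv (by norm_num; ring)
  have h2 := (h1.exp).div_const (Real.sqrt (2 * Real.pi))
  have e : gphi = fun y => Real.exp (-y ^ 2 / 2) / Real.sqrt (2 * Real.pi) := rfl
  rw [e]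
  exact h2.congr_deriv (by dsimp only; ring)

-- tangent line bound for negMulLog
lemma nml_le {x c : ℝ} (hx : 0 ≤ x) (hc : 0 < c) :
    Real.negMulLog x ≤ -x * Real.log c - x + c := by
  rcases eq_or_lt_of_le hx with h | h
  · simp [← h, hc.le]
  · have hlog : Real.log (c / x) ≤ c / x - 1 := Real.log_le_sub_one_of_pos (by positivity)
    rw [Real.log_div hc.ne' h.ne'] at hlog
    have h2 := mul_le_mul_of_nonneg_left hlog h.le
    rw [Real.negMulLog]
    have h3 : x * (c / x) = c := by field_simp
    nlinarith [h2]

lemma nml_abs_le_one {x : ℝ} (hx : 0 ≤ x) (hx1 : x ≤ 1) : |Real.negMulLog x| ≤ 1 := by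
  rcases eq_or_lt_of_le hx with h | h
  · simp [← h]
  · rw [abs_of_nonneg (Real.negMulLog_nonneg hx hx1)]
    have hlog : Real.log (1 / x) ≤ 1 / x - 1 := Real.log_le_sub_one_of_pos (by positivity)
    rw [Real.negMulLog]
    rw [Real.log_div one_ne_zero h.ne', Real.log_one] at hlog
    have h2 := mul_le_mul_of_nonneg_left hlog h.le
    have h3 : x * (1 / x) = 1 := by field_simp
    nlinarith [h2]

section delta
variable (H A : ℝ)

lemma deltaH_arg_nonneg : 0 ≤ A ^ 2 + Real.tanh H ^ 2 - (A * Real.tanh H) ^ 2 := by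
  nlinarith [_root_.tanh_sq_lt_one H, sq_nonneg A, sq_nonneg (Real.tanh H)]

lemma deltaH_nonneg : 0 ≤ DeltaH H A := Real.sqrt_nonneg _

lemma deltaH_sq : DeltaH H A ^ 2 = A ^ 2 * (1 - Real.tanh H ^ 2) + Real.tanh H ^ 2 := by
  rw [DeltaH, Real.sq_sqrt (deltaH_arg_nonneg H A)]; ring

lemma deltaH_ge_abs_tanh : |Real.tanh H| ≤ DeltaH H A := by
  have h1 := deltaH_sq H A
  have h2 := deltaH_nonneg H A
  have h3 := _root_.tanh_sq_lt_one H
  nlinarith [sq_abs (Real.tanh H), abs_nonneg (Real.tanh H), sq_nonneg A]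

lemma DH_eq : DH H A = (1 - Real.tanh H ^ 2) * (DeltaH H A - 1) / (DeltaH H A + 1) := by
  have h0 := deltaH_nonneg H A
  have h1 : DeltaH H A + 1 ≠ 0 := by linarith
  have h2 := deltaH_sq H A
  rw [DH]
  field_simp
  linear_combination (-(1 - Real.tanh H ^ 2)) * h2

lemma DH_le : DH H A ≤ 1 - Real.tanh H ^ 2 := by
  rw [DH_eq]
  have h0 := deltaH_nonneg H A
  have h1 : (0:ℝ) < DeltaH H A + 1 := by linarith
  have h3 := _root_.tanh_sq_lt_one H
  rw [div_le_iff₀ h1]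
  nlinarith

lemma DH_ge : -(1 - |Real.tanh H|) ^ 2 ≤ DH H A := by
  rw [DH_eq]
  have h0 := deltaH_nonneg H A
  have h1 : (0:ℝ) < DeltaH H A + 1 := by linarith
  have h2 := deltaH_ge_abs_tanh H A
  have h3 := tanh_abs_lt_one H
  have h4 := abs_nonneg (Real.tanh H)
  rw [le_div_iff₀ h1]
  nlinarith [sq_abs (Real.tanh H)]

lemma DH_abs_le_one : |DH H A| ≤ 1 := by
  have h1 := DH_le H A
  have h2 := DH_ge H A
  have h3 := tanh_abs_lt_one H
  have h4 := abs_nonneg (Real.tanh H)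
  rw [abs_le]
  constructor <;> nlinarith [sq_abs (Real.tanh H)]

lemma DH_one : DH H 1 = 0 := by rw [DH]; norm_num

lemma DH_ge_of_pos (hA : 0 < A) : 1 - Real.tanh H ^ 2 - 2 / A ≤ DH H A := by
  rw [DH_eq]
  have h0 := deltaH_nonneg H A
  have h1 : (0:ℝ) < DeltaH H A + 1 := by linarith
  have h3 := _root_.tanh_sq_lt_one H
  have h5 : A * (1 - Real.tanh H ^ 2) ≤ DeltaH H A := by
    rw [DeltaH]
    rw [show A ^ 2 + Real.tanh H ^ 2 - (A * Real.tanh H) ^ 2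
      = A ^ 2 * (1 - Real.tanh H ^ 2) + Real.tanh H ^ 2 by ring]
    refine Real.le_sqrt' (mul_pos hA (by linarith)) |>.mpr ?_
    nlinarith [sq_nonneg (A * Real.tanh H), sq_nonneg (Real.tanh H)]
  rw [le_div_iff₀ h1]
  have h7 : 2 * (1 - Real.tanh H ^ 2) ≤ 2 / A * (DeltaH H A + 1) := by
    rw [div_mul_eq_mul_div, le_div_iff₀ hA]
    nlinarith [h5]
  nlinarith [h7]
end delta

lemma GammaHD_eq (H D : ℝ) : GammaHD H D =
    Real.negMulLog (((1 + Real.tanh H) ^ 2 + D) / 4)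
    + Real.negMulLog ((1 - Real.tanh H ^ 2 - D) / 4)
    + Real.negMulLog ((1 - Real.tanh H ^ 2 - D) / 4)
    + Real.negMulLog (((1 - Real.tanh H) ^ 2 + D) / 4) := by
  rw [GammaHD, Fintype.sum_prod_type]
  simp [PHD]
  ring

lemma two_point_entropy (H : ℝ) :
    Real.negMulLog ((1 + Real.tanh H) / 2) + Real.negMulLog ((1 - Real.tanh H) / 2)
      = Real.log (2 * Real.cosh H) - H * Real.tanh H := by
  have hc := Real.cosh_pos H
  have h1 : (1 + Real.tanh H) / 2 = Real.exp H / (2 * Real.cosh H) := by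
    rw [Real.tanh_eq_sinh_div_cosh]
    field_simp
    nlinarith [Real.cosh_add_sinh H]
  have h2 : (1 - Real.tanh H) / 2 = Real.exp (-H) / (2 * Real.cosh H) := by
    rw [Real.tanh_eq_sinh_div_cosh]
    field_simp
    nlinarith [Real.cosh_sub_sinh H]
  rw [h1, h2, Real.negMulLog, Real.negMulLog,
    Real.log_div (Real.exp_pos _).ne' (by positivity),
    Real.log_div (Real.exp_pos _).ne' (by positivity),
    Real.log_exp, Real.log_exp, Real.tanh_eq_sinh_div_cosh]
  have hcc : Real.exp H + Real.exp (-H) = 2 * Real.cosh H := by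
    rw [Real.cosh_eq]; ring
  have hF : Real.exp (-H) = 2 * Real.cosh H - Real.exp H := by linarith
  have hsinh : Real.sinh H = Real.exp H - Real.cosh H := by
    have := Real.cosh_add_sinh H; linarith
  rw [hF, hsinh]
  field_simp
  ring

lemma gamma_bound (H A c : ℝ) (hc : 0 < c) :
    GammaHD H (DH H A) ≤ (Real.log (2 * Real.cosh H) - H * Real.tanh H)
      + (1 - Real.tanh H ^ 2 - DH H A) / 4 * (-(2 * Real.log 2) - 2 * Real.log c) + 2 * c := by
  rw [← two_point_entropy H, GammaHD_eq]
  set m := Real.tanh H with hm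
  set D := DH H A with hD
  have hmabs := tanh_abs_lt_one H
  have hD1 : D ≤ 1 - m ^ 2 := DH_le H A
  have hD2 : -(1 - |m|) ^ 2 ≤ D := DH_ge H A
  have habs := abs_nonneg m
  obtain ⟨hm1, hm2⟩ := abs_lt.mp hmabs
  have hc1 : (0:ℝ) < (1 + m) / 2 := by linarith
  have hc4 : (0:ℝ) < (1 - m) / 2 := by linarith
  have hp1 : (0:ℝ) ≤ ((1 + m) ^ 2 + D) / 4 := by
    nlinarith [sq_abs m, le_abs_self m, neg_abs_le m]
  have hp2 : (0:ℝ) ≤ (1 - m ^ 2 - D) / 4 := by linarith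
  have hp4 : (0:ℝ) ≤ ((1 - m) ^ 2 + D) / 4 := by
    nlinarith [sq_abs m, le_abs_self m, neg_abs_le m]
  have b1 := nml_le hp1 hc1
  have b2 := nml_le hp2 hc
  have b4 := nml_le hp4 hc4
  have hlogsum : Real.log ((1 + m) / 2) + Real.log ((1 - m) / 2) ≤ -(2 * Real.log 2) := by
    rw [← Real.log_mul hc1.ne' hc4.ne']
    have hle : (1 + m) / 2 * ((1 - m) / 2) ≤ 1 / 4 := by nlinarith
    have h14 : Real.log ((1 + m) / 2 * ((1 - m) / 2)) ≤ Real.log (1 / 4) :=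
      Real.log_le_log (by positivity) hle
    have : Real.log (1 / 4 : ℝ) = -(2 * Real.log 2) := by
      rw [show (1:ℝ) / 4 = ((2:ℝ) ^ 2)⁻¹ by norm_num, Real.log_inv, Real.log_pow]
      push_cast; ring
    linarith
  have hkey : (1 - m ^ 2 - D) / 4 * (Real.log ((1 + m) / 2) + Real.log ((1 - m) / 2))
      ≤ (1 - m ^ 2 - D) / 4 * (-(2 * Real.log 2)) := mul_le_mul_of_nonneg_left hlogsum hp2
  have e1 : Real.negMulLog ((1 + m) / 2) = -((1 + m) / 2) * Real.log ((1 + m) / 2) := rfl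
  have e4 : Real.negMulLog ((1 - m) / 2) = -((1 - m) / 2) * Real.log ((1 - m) / 2) := rfl
  nlinarith [b1, b2, b4, hkey, e1, e4]

lemma gamma_abs_le (H A : ℝ) : |GammaHD H (DH H A)| ≤ 4 := by
  rw [GammaHD_eq]
  set m := Real.tanh H
  set D := DH H A
  have hD1 : D ≤ 1 - m ^ 2 := DH_le H A
  have hD2 : -(1 - |m|) ^ 2 ≤ D := DH_ge H A
  obtain ⟨hm1, hm2⟩ := abs_lt.mp (tanh_abs_lt_one H)
  have habs := abs_nonneg m
  have hsq := sq_abs m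
  have hl := le_abs_self m
  have hnl := neg_abs_le m
  obtain ⟨l1, r1⟩ := abs_le.mp (nml_abs_le_one
    (x := ((1 + m) ^ 2 + D) / 4) (by nlinarith) (by nlinarith))
  obtain ⟨l2, r2⟩ := abs_le.mp (nml_abs_le_one
    (x := (1 - m ^ 2 - D) / 4) (by nlinarith) (by nlinarith))
  obtain ⟨l4, r4⟩ := abs_le.mp (nml_abs_le_one
    (x := ((1 - m) ^ 2 + D) / 4) (by nlinarith) (by nlinarith))
  rw [abs_le]
  constructor <;> linarith

lemma continuous_gphi : Continuous gphi := by
  have : Continuous fun x : ℝ => Real.exp (-x ^ 2 / 2) :=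
    Real.continuous_exp.comp (by continuity)
  exact this.div_const _

lemma integrable_abs_mul_gphi : Integrable (fun x : ℝ => |x| * gphi x) := by
  refine integrable_id_mul_gphi.abs.congr (Filter.Eventually.of_forall fun x => ?_)
  show |x * gphi x| = _
  rw [abs_mul, abs_of_nonneg (gphi_nonneg x)]

lemma abs_log_two_cosh_le (x : ℝ) : |Real.log (2 * Real.cosh x)| ≤ Real.log 2 + |x| := by
  have h1 : (1:ℝ) ≤ Real.cosh x := Real.one_le_cosh x
  rw [abs_of_nonneg (Real.log_nonneg (by linarith))]
  have e1 : Real.exp x ≤ Real.exp |x| := Real.exp_le_exp.mpr (le_abs_self x)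
  have e2 : Real.exp (-x) ≤ Real.exp |x| := Real.exp_le_exp.mpr (neg_le_abs x)
  have h2 : 2 * Real.cosh x ≤ 2 * Real.exp |x| := by
    have hc := Real.cosh_eq x
    nlinarith
  calc Real.log (2 * Real.cosh x) ≤ Real.log (2 * Real.exp |x|) :=
        Real.log_le_log (by positivity) h2
    _ = Real.log 2 + |x| := by
        rw [Real.log_mul two_ne_zero (Real.exp_pos _).ne', Real.log_exp]

lemma continuous_tanh_lin (a : ℝ) : Continuous fun z : ℝ => Real.tanh (a * z) :=
  continuous_tanh'.comp (continuous_const.mul continuous_id)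

lemma ibp_tanh (a : ℝ) :
    ∫ z : ℝ, z * Real.tanh (a * z) * gphi z
      = a * ∫ z : ℝ, (1 - Real.tanh (a * z) ^ 2) * gphi z := by
  have hu : ∀ x : ℝ, HasDerivAt (fun z => Real.tanh (a * z))
      (a * (1 - Real.tanh (a * x) ^ 2)) x := by
    intro x
    have hl : HasDerivAt (fun z : ℝ => a * z) a x := by
      simpa using (hasDerivAt_id x).const_mul a
    have h := (hasDerivAt_tanh' (a * x)).comp x hl
    simpa [mul_comm, Function.comp_def] using h
  have meas_tanh : AEStronglyMeasurable (fun z : ℝ => Real.tanh (a * z)) volume :=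
    (continuous_tanh_lin a).aestronglyMeasurable
  have huv' : Integrable (fun z : ℝ => Real.tanh (a * z) * (-(z * gphi z))) :=
    (integrable_id_mul_gphi.neg).bdd_mul meas_tanh
      (c := 1) (ae_of_all _ fun x => by rw [Real.norm_eq_abs]; exact (tanh_abs_lt_one _).le)
  have hu'v : Integrable (fun z : ℝ => (a * (1 - Real.tanh (a * z) ^ 2)) * gphi z) := by
    refine integrable_bdd_mul_gphi ?_ |a| fun x => ?_
    · exact (continuous_const.mul
        (continuous_const.sub ((continuous_tanh_lin a).pow 2))).aestronglyMeasurable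
    · rw [abs_mul]
      have h1 : |1 - Real.tanh (a * x) ^ 2| ≤ 1 := by
        rw [abs_of_nonneg (by nlinarith [_root_.tanh_sq_lt_one (a * x)] :
          (0:ℝ) ≤ 1 - Real.tanh (a * x) ^ 2)]
        nlinarith [sq_nonneg (Real.tanh (a * x))]
      nlinarith [abs_nonneg a]
  have huv : Integrable (fun z : ℝ => Real.tanh (a * z) * gphi z) :=
    integrable_bdd_mul_gphi meas_tanh 1 fun x => (tanh_abs_lt_one _).le
  have key := MeasureTheory.integral_mul_deriv_eq_deriv_mul_of_integrable
    (u := fun z => Real.tanh (a * z)) (v := gphi)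
    (u' := fun z => a * (1 - Real.tanh (a * z) ^ 2)) (v' := fun z => -(z * gphi z))
    (fun x _ => hu x) (fun x _ => hasDerivAt_gphi x) huv' hu'v huv
  have e1 : (fun z : ℝ => Real.tanh (a * z) * (-(z * gphi z)))
      = fun z : ℝ => -(z * Real.tanh (a * z) * gphi z) := funext fun z => by ring
  have e2 : (fun z : ℝ => (a * (1 - Real.tanh (a * z) ^ 2)) * gphi z)
      = fun z : ℝ => a * ((1 - Real.tanh (a * z) ^ 2) * gphi z) := funext fun z => by ring
  beta_reduce at key
  rw [e1] at key
  rw [MeasureTheory.integral_neg] at key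
  have key2 : ∫ z : ℝ, z * Real.tanh (a * z) * gphi z
      = ∫ z : ℝ, a * (1 - Real.tanh (a * z) ^ 2) * gphi z := by
    have := neg_injective key
    linarith [this]
  rw [key2, e2, MeasureTheory.integral_const_mul]

lemma continuous_DeltaH_A (H : ℝ) : Continuous fun A => DeltaH H A := by
  apply Real.continuous_sqrt.comp
  continuity

lemma continuous_DH_A (H : ℝ) : Continuous fun A => DH H A := by
  refine Continuous.div (by continuity) (((continuous_DeltaH_A H).add continuous_const).pow 2)
    fun A => ?_
  have := deltaH_nonneg H A
  exact pow_ne_zero 2 (by dsimp; linarith)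

lemma continuous_DeltaH_z (a A : ℝ) : Continuous fun z => DeltaH (a * z) A := by
  apply Real.continuous_sqrt.comp
  exact (continuous_const.add ((continuous_tanh_lin a).pow 2)).sub
    ((continuous_const.mul (continuous_tanh_lin a)).pow 2)

lemma continuous_DH_z (a A : ℝ) : Continuous fun z => DH (a * z) A := by
  refine Continuous.div
    (continuous_const.mul ((continuous_const.sub ((continuous_tanh_lin a).pow 2)).pow 2))
    (((continuous_DeltaH_z a A).add continuous_const).pow 2) fun z => ?_
  have := deltaH_nonneg (a * z) A
  exact pow_ne_zero 2 (by dsimp; linarith)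

lemma numeric_bound {q ι : ℝ} (hβ1 : (0.436:ℝ) < 1 - q) (hβ2 : 1 - q < (0.4361:ℝ))
    (hι : 0 < ι) (hι' : ι ≤ 0.025) :
    ι * (1 - q) / 4 * (2 - 2 * Real.log 2 - 2 * Real.log (ι * (1 - q) / 4))
      ≤ 0.81 * ι + ι / 2 * Real.log (1 / ι) := by
  set c : ℝ := ι * (1 - q) / 4 with hcdef
  have hβpos : (0:ℝ) < 1 - q := by linarith
  have hc : 0 < c := by rw [hcdef]; positivity
  have hL : Real.log c = Real.log ι + Real.log ((1 - q) / 4) := by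
    rw [hcdef, show ι * (1 - q) / 4 = ι * ((1 - q) / 4) by ring,
      Real.log_mul hι.ne' (by positivity)]
  have hsplit : Real.log ((1 - q) / 4) = Real.log ((1 - q) / 2) - Real.log 2 := by
    rw [show (1 - q) / 4 = (1 - q) / 2 / 2 by ring, Real.log_div (by positivity) two_ne_zero]
  have hexp17 : (4.62 : ℝ) ≤ Real.exp 1.7 := by
    have h1 := Real.exp_one_gt_d9
    have h2 := Real.add_one_le_exp (0.7 : ℝ)
    have h3 : Real.exp (1.7 : ℝ) = Real.exp 1 * Real.exp 0.7 := by
      rw [← Real.exp_add]; norm_num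
    rw [h3]; nlinarith [Real.exp_pos (0.7 : ℝ)]
  have hlogh : (-1.7 : ℝ) ≤ Real.log ((1 - q) / 2) := by
    have h4 : Real.exp (-1.7 : ℝ) * Real.exp (1.7 : ℝ) = 1 := by
      rw [← Real.exp_add]; norm_num
    have hle : Real.exp (-1.7 : ℝ) ≤ (1 - q) / 2 := by
      nlinarith [Real.exp_pos (-1.7 : ℝ), hexp17, hβ1]
    calc (-1.7 : ℝ) = Real.log (Real.exp (-1.7)) := (Real.log_exp _).symm
      _ ≤ Real.log ((1 - q) / 2) := Real.log_le_log (Real.exp_pos _) hle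
  have hLh0 : Real.log ((1 - q) / 2) ≤ 0 := Real.log_nonpos (by positivity) (by linarith)
  have hlogι : Real.log ι ≤ 0 := Real.log_nonpos hι.le (by linarith)
  have hloginv : Real.log (1 / ι) = -Real.log ι := by rw [one_div, Real.log_inv]
  have e1 : c * (2 - 2 * Real.log ((1 - q) / 2)) ≤ 0.81 * ι := by
    have h54 : 2 - 2 * Real.log ((1 - q) / 2) ≤ 5.4 := by linarith
    have hcle : c ≤ ι * 0.4361 / 4 := by rw [hcdef]; nlinarith
    calc c * (2 - 2 * Real.log ((1 - q) / 2)) ≤ ι * 0.4361 / 4 * 5.4 :=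
          mul_le_mul hcle h54 (by linarith) (by positivity)
      _ ≤ 0.81 * ι := by nlinarith
  have e2 : 2 * c * (-Real.log ι) ≤ ι / 2 * (-Real.log ι) := by
    refine mul_le_mul_of_nonneg_right ?_ (by linarith)
    rw [hcdef]; nlinarith
  have eqc : c * (2 - 2 * Real.log 2 - 2 * Real.log c)
      = c * (2 - 2 * Real.log ((1 - q) / 2)) + 2 * c * (-Real.log ι) := by
    rw [hL, hsplit]; ring
  rw [hloginv]
  linarith [e1, e2, eqc]

end AuxiliaryLemmas

/-- Corollary 8.3; `κ = 0`. For `α ∈ (α_lb, α_ub)`, with `q = q_⋆(α)`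
and `ψ = ψ_⋆(α) = R(q,α)`: parametrizing `λ = 1 - ι`, for all `0 < ι ≤ 0.025` one has
`𝓗(λ) - 𝓗(1) ≤ 0.81 ι + (ι/2) log(1/ι)`, where `𝓗(1) = -𝓗_⋆`. -/
theorem HH_near_one_bound (α q : ℝ) (hα : α ∈ Set.Ioo alphaLB alphaUB)
    (hq : q ∈ Set.Ioo qLB qUB) (hfix : q = Pfun (Rfun 0 q α)) :
    ∀ ι : ℝ, 0 < ι → ι ≤ 0.025 →
      HHfun q (Rfun 0 q α) (1 - ι) - (-(Hstar q (Rfun 0 q α)))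
        ≤ 0.81 * ι + ι / 2 * Real.log (1 / ι) := by
  intro ι hι hι'
  set ψ := Rfun 0 q α with hψdef
  set a := Real.sqrt ψ with hadef
  have hqlb : (0.56394907949 : ℝ) < q := by have h := hq.1; rwa [qLB] at h
  have hqub : q < (0.56394908030 : ℝ) := by have h := hq.2; rwa [qUB] at h
  have hβ1 : (0.436 : ℝ) < 1 - q := by norm_num at hqub ⊢; linarith
  have hβ2 : 1 - q < (0.4361 : ℝ) := by norm_num at hqlb ⊢; linarith
  have hβpos : (0:ℝ) < 1 - q := by linarith
  have hfix' : q = ∫ z : ℝ, Real.tanh (a * z) ^ 2 * gphi z := by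
    rw [hfix, Pfun, ← hadef]
  have hα0 : (0:ℝ) < α := by
    have h := hα.1; rw [alphaLB] at h; norm_num at h ⊢; linarith
  have hψ0 : (0:ℝ) ≤ ψ := by
    rw [hψdef, Rfun]
    exact mul_nonneg hα0.le
      (integral_nonneg fun z => mul_nonneg (sq_nonneg _) (gphi_nonneg z))
  have hψa : ψ = a ^ 2 := (Real.sq_sqrt hψ0).symm
  clear_value a ψ
  -- basic integrability
  have meas_tanh : AEStronglyMeasurable (fun z : ℝ => Real.tanh (a * z)) volume :=
    (continuous_tanh_lin a).aestronglyMeasurable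
  have int_tanhsq : Integrable (fun z : ℝ => Real.tanh (a * z) ^ 2 * gphi z) := by
    refine integrable_bdd_mul_gphi ((continuous_tanh_lin a).pow 2).aestronglyMeasurable 1
      fun x => ?_
    rw [abs_of_nonneg (sq_nonneg _)]
    nlinarith [_root_.tanh_sq_lt_one (a * x)]
  have int_one_sub : Integrable (fun z : ℝ => (1 - Real.tanh (a * z) ^ 2) * gphi z) := by
    have h := integrable_gphi.sub int_tanhsq
    exact h.congr (Filter.Eventually.of_forall fun z => by
      simp only [Pi.sub_apply]; ring)
  have I1 : ∫ z : ℝ, (1 - Real.tanh (a * z) ^ 2) * gphi z = 1 - q := by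
    have e : (fun z : ℝ => (1 - Real.tanh (a * z) ^ 2) * gphi z)
        = fun z => gphi z - Real.tanh (a * z) ^ 2 * gphi z := funext fun z => by ring
    rw [e, MeasureTheory.integral_sub integrable_gphi int_tanhsq, integral_gphi, ← hfix']
  have IBP : ∫ z : ℝ, (a * z) * Real.tanh (a * z) * gphi z = ψ * (1 - q) := by
    have e : (fun z : ℝ => (a * z) * Real.tanh (a * z) * gphi z)
        = fun z => a * (z * Real.tanh (a * z) * gphi z) := funext fun z => by ring
    rw [e, MeasureTheory.integral_const_mul, ibp_tanh, I1, hψa]; ring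
  have int_DH : ∀ A : ℝ, Integrable (fun z : ℝ => DH (a * z) A * gphi z) := fun A =>
    integrable_bdd_mul_gphi (continuous_DH_z a A).aestronglyMeasurable 1
      fun x => DH_abs_le_one _ _
  -- continuity of W
  have contW : Continuous fun A => ∫ z : ℝ, DH (a * z) A * gphi z := by
    rw [continuous_iff_continuousAt]
    intro A₀
    apply MeasureTheory.continuousAt_of_dominated (bound := gphi)
    · exact Filter.Eventually.of_forall fun A =>
        ((continuous_DH_z a A).mul continuous_gphi).aestronglyMeasurable
    · refine Filter.Eventually.of_forall fun A => (ae_of_all _ fun z => ?_)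
      rw [Real.norm_eq_abs, abs_mul, abs_of_nonneg (gphi_nonneg z)]
      nlinarith [DH_abs_le_one (a * z) A, gphi_nonneg z, abs_nonneg (DH (a * z) A)]
    · exact integrable_gphi
    · exact ae_of_all _ fun z =>
        ((continuous_DH_A (a * z)).mul continuous_const).continuousAt
  -- ellfun in terms of W
  have ellW : ∀ A : ℝ, ellfun q ψ A = (∫ z : ℝ, DH (a * z) A * gphi z) / (1 - q) := by
    intro A
    have e : (fun z : ℝ => DH (a * z) A / (1 - q) * gphi z)
        = fun z => (DH (a * z) A * gphi z) / (1 - q) := funext fun z => by ring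
    rw [ellfun, ← hadef, e, MeasureTheory.integral_div]
  -- lower bound for W
  have WT : ∀ T : ℝ, 0 < T → (1 - q) - 2 / T ≤ ∫ z : ℝ, DH (a * z) T * gphi z := by
    intro T hT
    have int_lhs : Integrable
        (fun z : ℝ => (1 - Real.tanh (a * z) ^ 2) * gphi z - 2 / T * gphi z) :=
      int_one_sub.sub (integrable_gphi.const_mul _)
    have hmono := MeasureTheory.integral_mono int_lhs (int_DH T) (fun z => ?_)
    · rw [MeasureTheory.integral_sub int_one_sub (integrable_gphi.const_mul _), I1,
        MeasureTheory.integral_const_mul, integral_gphi] at hmono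
      linarith
    · have h := mul_le_mul_of_nonneg_right (DH_ge_of_pos (a * z) T hT) (gphi_nonneg z)
      simp only
      nlinarith [h]
  -- existence of the inverse point
  have hιβ : 0 < ι * (1 - q) := mul_pos hι hβpos
  set T : ℝ := 4 / (ι * (1 - q)) with hTdef
  clear_value T
  have hT0 : 0 < T := by rw [hTdef]; positivity
  have hT1 : (1:ℝ) ≤ T := by
    rw [hTdef, le_div_iff₀ hιβ]; nlinarith
  have hW1 : (∫ z : ℝ, DH (a * z) 1 * gphi z) = 0 := by
    simp [DH_one]
  have hWTlow : (1 - q) * (1 - ι) ≤ ∫ z : ℝ, DH (a * z) T * gphi z := by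
    have h2T : 2 / T = ι * (1 - q) / 2 := by
      rw [hTdef]; field_simp; ring
    have h := WT T hT0
    rw [h2T] at h
    nlinarith
  have hmem : (1 - q) * (1 - ι) ∈
      Icc ((fun A => ∫ z : ℝ, DH (a * z) A * gphi z) 1)
          ((fun A => ∫ z : ℝ, DH (a * z) A * gphi z) T) := by
    simp only
    rw [hW1]
    exact ⟨by nlinarith, hWTlow⟩
  obtain ⟨A₀, hA₀mem, hA₀val0⟩ := intermediate_value_Icc hT1 contW.continuousOn hmem
  have hA₀val : (∫ z : ℝ, DH (a * z) A₀ * gphi z) = (1 - q) * (1 - ι) := hA₀val0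
  have hex : ∃ A' ∈ Set.Ioi (0:ℝ), ellfun q ψ A' = 1 - ι := by
    refine ⟨A₀, lt_of_lt_of_le one_pos hA₀mem.1, ?_⟩
    rw [ellW, hA₀val, mul_comm, mul_div_assoc, div_self hβpos.ne', mul_one]
  have hBmem : (0:ℝ) < Ainv q ψ (1 - ι) := by
    rw [Ainv]; exact Function.invFunOn_mem hex
  have hBval : ellfun q ψ (Ainv q ψ (1 - ι)) = 1 - ι := by
    rw [Ainv]; exact Function.invFunOn_eq hex
  set B := Ainv q ψ (1 - ι) with hBdef
  clear_value B
  have hWB : ∫ z : ℝ, DH (a * z) B * gphi z = (1 - q) * (1 - ι) := by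
    have h := hBval
    rw [ellW, div_eq_iff hβpos.ne'] at h
    linarith
  -- the entropy bound, pointwise and integrated
  set c : ℝ := ι * (1 - q) / 4 with hcdef
  clear_value c
  have hc : 0 < c := by rw [hcdef]; positivity
  set K : ℝ := -(2 * Real.log 2) - 2 * Real.log c with hKdef
  clear_value K
  have intΓ : Integrable (fun z : ℝ => GammaHD (a * z) (DH (a * z) B) * gphi z) := by
    refine integrable_bdd_mul_gphi ?_ 4 fun x => gamma_abs_le _ _
    have e : (fun z : ℝ => GammaHD (a * z) (DH (a * z) B)) = fun z =>
        Real.negMulLog (((1 + Real.tanh (a * z)) ^ 2 + DH (a * z) B) / 4)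
        + Real.negMulLog ((1 - Real.tanh (a * z) ^ 2 - DH (a * z) B) / 4)
        + Real.negMulLog ((1 - Real.tanh (a * z) ^ 2 - DH (a * z) B) / 4)
        + Real.negMulLog (((1 - Real.tanh (a * z)) ^ 2 + DH (a * z) B) / 4) :=
      funext fun z => GammaHD_eq _ _
    rw [e]
    have ht := continuous_tanh_lin a
    have hDc := continuous_DH_z a B
    have c1 : Continuous fun z : ℝ =>
        Real.negMulLog (((1 + Real.tanh (a * z)) ^ 2 + DH (a * z) B) / 4) :=
      Real.continuous_negMulLog.comp
        ((((continuous_const.add ht).pow 2).add hDc).div_const 4)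
    have c2 : Continuous fun z : ℝ =>
        Real.negMulLog ((1 - Real.tanh (a * z) ^ 2 - DH (a * z) B) / 4) :=
      Real.continuous_negMulLog.comp
        (((continuous_const.sub (ht.pow 2)).sub hDc).div_const 4)
    have c4 : Continuous fun z : ℝ =>
        Real.negMulLog (((1 - Real.tanh (a * z)) ^ 2 + DH (a * z) B) / 4) :=
      Real.continuous_negMulLog.comp
        ((((continuous_const.sub ht).pow 2).add hDc).div_const 4)
    exact (((c1.add c2).add c2).add c4).aestronglyMeasurable
  have int_F1 : Integrable (fun z : ℝ => Real.log (2 * Real.cosh (a * z)) * gphi z) := by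
    refine MeasureTheory.Integrable.mono'
      (g := fun z => Real.log 2 * gphi z + |a| * (|z| * gphi z))
      ((integrable_gphi.const_mul _).add (integrable_abs_mul_gphi.const_mul |a|)) ?_
      (ae_of_all _ fun z => ?_)
    · refine (Continuous.log ?_ fun x => ?_).mul continuous_gphi |>.aestronglyMeasurable
      · exact continuous_const.mul (Real.continuous_cosh.comp (continuous_const.mul continuous_id))
      · have := Real.cosh_pos (a * x); dsimp; positivity
    · rw [Real.norm_eq_abs, abs_mul, abs_of_nonneg (gphi_nonneg z)]
      have hb := abs_log_two_cosh_le (a * z)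
      rw [abs_mul] at hb
      calc |Real.log (2 * Real.cosh (a * z))| * gphi z
          ≤ (Real.log 2 + |a| * |z|) * gphi z :=
            mul_le_mul_of_nonneg_right hb (gphi_nonneg z)
        _ = Real.log 2 * gphi z + |a| * (|z| * gphi z) := by ring
  have int_F2 : Integrable (fun z : ℝ => (a * z) * Real.tanh (a * z) * gphi z) := by
    have base : Integrable (fun z : ℝ => a * (z * gphi z)) := integrable_id_mul_gphi.const_mul a
    have h : Integrable (fun z : ℝ => Real.tanh (a * z) * (a * (z * gphi z))) :=
      base.bdd_mul meas_tanh (c := 1) (ae_of_all _ fun x => by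
        rw [Real.norm_eq_abs]; exact (tanh_abs_lt_one _).le)
    exact h.congr (Filter.Eventually.of_forall fun z => by ring)
  have int_F3 : Integrable
      (fun z : ℝ => (1 - Real.tanh (a * z) ^ 2 - DH (a * z) B) * gphi z) := by
    have h := int_one_sub.sub (int_DH B)
    exact h.congr (Filter.Eventually.of_forall fun z => by
      simp only [Pi.sub_apply]; ring)
  have hpt : ∀ z : ℝ, GammaHD (a * z) (DH (a * z) B) * gphi z ≤
      (Real.log (2 * Real.cosh (a * z)) * gphi z - (a * z) * Real.tanh (a * z) * gphi z)
      + K / 4 * ((1 - Real.tanh (a * z) ^ 2 - DH (a * z) B) * gphi z)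
      + 2 * c * gphi z := by
    intro z
    have h := mul_le_mul_of_nonneg_right (gamma_bound (a * z) B c hc) (gphi_nonneg z)
    calc GammaHD (a * z) (DH (a * z) B) * gphi z
        ≤ (Real.log (2 * Real.cosh (a * z)) - (a * z) * Real.tanh (a * z)
            + (1 - Real.tanh (a * z) ^ 2 - DH (a * z) B) / 4
              * (-(2 * Real.log 2) - 2 * Real.log c) + 2 * c) * gphi z := h
      _ = _ := by rw [hKdef]; ring
  have int_rhs : Integrable (fun z : ℝ =>
      (Real.log (2 * Real.cosh (a * z)) * gphi z - (a * z) * Real.tanh (a * z) * gphi z)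
      + K / 4 * ((1 - Real.tanh (a * z) ^ 2 - DH (a * z) B) * gphi z)
      + 2 * c * gphi z) :=
    ((int_F1.sub int_F2).add (int_F3.const_mul (K / 4))).add (integrable_gphi.const_mul (2 * c))
  have hint : (∫ z : ℝ, GammaHD (a * z) (DH (a * z) B) * gphi z) ≤ ∫ z : ℝ,
      ((Real.log (2 * Real.cosh (a * z)) * gphi z - (a * z) * Real.tanh (a * z) * gphi z)
      + K / 4 * ((1 - Real.tanh (a * z) ^ 2 - DH (a * z) B) * gphi z)
      + 2 * c * gphi z) := MeasureTheory.integral_mono intΓ int_rhs hpt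
  have intS1 : Integrable (fun z : ℝ =>
      Real.log (2 * Real.cosh (a * z)) * gphi z - (a * z) * Real.tanh (a * z) * gphi z) :=
    int_F1.sub int_F2
  have intS2 : Integrable (fun z : ℝ =>
      Real.log (2 * Real.cosh (a * z)) * gphi z - (a * z) * Real.tanh (a * z) * gphi z
      + K / 4 * ((1 - Real.tanh (a * z) ^ 2 - DH (a * z) B) * gphi z)) :=
    intS1.add (int_F3.const_mul (K / 4))
  have hF1 : ∫ z : ℝ, Real.log (2 * Real.cosh (a * z)) * gphi z
      = Hstar q ψ + ψ * (1 - q) := by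
    rw [Hstar, ← hadef]; ring
  have hF3 : ∫ z : ℝ, (1 - Real.tanh (a * z) ^ 2 - DH (a * z) B) * gphi z = ι * (1 - q) := by
    have e : (fun z : ℝ => (1 - Real.tanh (a * z) ^ 2 - DH (a * z) B) * gphi z)
        = fun z => (1 - Real.tanh (a * z) ^ 2) * gphi z - DH (a * z) B * gphi z :=
      funext fun z => by ring
    rw [e, MeasureTheory.integral_sub int_one_sub (int_DH B), I1, hWB]; ring
  have Ieq : (∫ z : ℝ,
      ((Real.log (2 * Real.cosh (a * z)) * gphi z - (a * z) * Real.tanh (a * z) * gphi z)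
      + K / 4 * ((1 - Real.tanh (a * z) ^ 2 - DH (a * z) B) * gphi z)
      + 2 * c * gphi z))
      = (Hstar q ψ + ψ * (1 - q)) - ψ * (1 - q) + K / 4 * (ι * (1 - q)) + 2 * c * 1 := by
    rw [MeasureTheory.integral_add intS2 (integrable_gphi.const_mul (2 * c)),
      MeasureTheory.integral_add intS1 (int_F3.const_mul (K / 4)),
      MeasureTheory.integral_sub int_F1 int_F2,
      MeasureTheory.integral_const_mul (K / 4), MeasureTheory.integral_const_mul (2 * c),
      integral_gphi, IBP, hF1, hF3]
  rw [Ieq] at hint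
  -- main structural bound
  have main : HHfun q ψ (1 - ι) - -(Hstar q ψ)
      ≤ c * (2 - 2 * Real.log 2 - 2 * Real.log c) := by
    rw [HHfun, ← hadef, ← hBdef]
    have hKc : K / 4 * (ι * (1 - q)) = c * K := by rw [hcdef]; ring
    have hexpand : c * (2 - 2 * Real.log 2 - 2 * Real.log c) = c * K + 2 * c := by
      rw [hKdef]; ring
    rw [hexpand]
    linarith [hint, hKc]
  have hnum := numeric_bound hβ1 hβ2 hι hι'
  rw [← hcdef] at hnum
  linarith [main, hnum]
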